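/- On the closed line segment joining z_I(h,k) and z_T(h,k) (points of tangency of C(h,k) with its Farey neighbors, transformed to the z-plane), every point z satisfies Re(z) ≤ 1/k and Re(1/z) ≥ k. -/

import Mathlib

private lemma aux_disk (k P Q : ℝ) (hk0 : 0 < k) (key : k * (P^2 + Q^2) ≤ P)
    (hP : 0 < P) (hns : 0 < P * P + Q * Q) :
    P ≤ 1 / k ∧ k ≤ P / (P * P + Q * Q) := by
  constructor
  · rw [le_div_iff₀ hk0]
    nlinarith [mul_nonneg hk0.le (sq_nonneg Q)]
  · rw [le_div_iff₀ hns]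
    nlinarith

/-- On the closed segment joining
`z_I = k/(k²+k_p²) + i·k_p/(k²+k_p²)` and `z_T = k/(k²+k_s²) − i·k_s/(k²+k_s²)`
(where `k, k_p, k_s` are positive integers), every point `z` satisfies
`Re z ≤ 1/k` and `Re(1/z) ≥ k`. -/
theorem segment_re_bounds (k kp ks : ℕ) (hk : 1 ≤ k) (hkp : 1 ≤ kp) (hks : 1 ≤ ks)
    (z : ℂ)
    (hz : z ∈ segment ℝ
      ((k : ℂ) / (k ^ 2 + kp ^ 2) + Complex.I * kp / (k ^ 2 + kp ^ 2))
      ((k : ℂ) / (k ^ 2 + ks ^ 2) - Complex.I * ks / (k ^ 2 + ks ^ 2))) :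
    z.re ≤ 1 / k ∧ (k : ℝ) ≤ (1 / z).re := by
  have hk0 : (0:ℝ) < k := by exact_mod_cast hk
  have hA : (0:ℝ) < (k:ℝ)^2 + (kp:ℝ)^2 := by positivity
  have hB : (0:ℝ) < (k:ℝ)^2 + (ks:ℝ)^2 := by positivity
  have hw1 : ((k : ℂ) / (k ^ 2 + kp ^ 2) + Complex.I * kp / (k ^ 2 + kp ^ 2))
      = Complex.mk ((k:ℝ)/((k:ℝ)^2 + (kp:ℝ)^2)) ((kp:ℝ)/((k:ℝ)^2 + (kp:ℝ)^2)) := by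
    rw [Complex.mk_eq_add_mul_I]
    push_cast
    ring
  have hw2 : ((k : ℂ) / (k ^ 2 + ks ^ 2) - Complex.I * ks / (k ^ 2 + ks ^ 2))
      = Complex.mk ((k:ℝ)/((k:ℝ)^2 + (ks:ℝ)^2)) (-((ks:ℝ)/((k:ℝ)^2 + (ks:ℝ)^2))) := by
    rw [Complex.mk_eq_add_mul_I]
    push_cast
    ring
  rw [hw1, hw2] at hz
  obtain ⟨a, b, ha, hb, hab, rfl⟩ := hz
  set u1 : ℝ := (k:ℝ)/((k:ℝ)^2 + (kp:ℝ)^2) with hu1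
  set v1 : ℝ := (kp:ℝ)/((k:ℝ)^2 + (kp:ℝ)^2) with hv1
  set u2 : ℝ := (k:ℝ)/((k:ℝ)^2 + (ks:ℝ)^2) with hu2
  set v2 : ℝ := (ks:ℝ)/((k:ℝ)^2 + (ks:ℝ)^2) with hv2
  set z : ℂ := a • Complex.mk u1 v1 + b • Complex.mk u2 (-v2) with hzdef
  have hre : z.re = a * u1 + b * u2 := by
    simp [hzdef, Complex.add_re, Complex.smul_re]
  have him : z.im = a * v1 - b * v2 := by
    simp [hzdef, Complex.add_im, Complex.smul_im]; ring
  have e1 : (k:ℝ) * (u1^2 + v1^2) = u1 := by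
    rw [hu1, hv1]; field_simp
  have e2 : (k:ℝ) * (u2^2 + v2^2) = u2 := by
    rw [hu2, hv2]; field_simp
  have main : (a*u1+b*u2)^2 + (a*v1-b*v2)^2 ≤ a*(u1^2+v1^2) + b*(u2^2+v2^2) := by
    nlinarith [mul_nonneg (mul_nonneg ha hb) (sq_nonneg (u1-u2)),
      mul_nonneg (mul_nonneg ha hb) (sq_nonneg (v1+v2))]
  have key : (k:ℝ) * (z.re^2 + z.im^2) ≤ z.re := by
    rw [hre, him]
    calc (k:ℝ) * ((a*u1+b*u2)^2 + (a*v1-b*v2)^2)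
        ≤ (k:ℝ) * (a*(u1^2+v1^2) + b*(u2^2+v2^2)) := by
          exact mul_le_mul_of_nonneg_left main hk0.le
      _ = a * ((k:ℝ)*(u1^2+v1^2)) + b * ((k:ℝ)*(u2^2+v2^2)) := by ring
      _ = a * u1 + b * u2 := by rw [e1, e2]
  have hu1pos : 0 < u1 := by rw [hu1]; positivity
  have hu2pos : 0 < u2 := by rw [hu2]; positivity
  have hP : 0 < z.re := by
    rw [hre]
    rcases eq_or_lt_of_le ha with h | h
    · have hb1 : b = 1 := by linarith
      rw [← h, hb1]; simpa using hu2pos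
    · have h1 : 0 < a * u1 := mul_pos h hu1pos
      have h2 : 0 ≤ b * u2 := mul_nonneg hb hu2pos.le
      linarith
  have hns : 0 < z.re * z.re + z.im * z.im := by nlinarith [sq_nonneg z.im]
  obtain ⟨g1, g2⟩ := aux_disk k z.re z.im hk0 key hP hns
  refine ⟨g1, ?_⟩
  rw [one_div, Complex.inv_re, Complex.normSq_apply]
  exact g2
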